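/- Let σ > 0 and ω, c real with 4ω > c², and write φ = φ_{ω,c}, θ = θ_{ω,c}. Suppose χ₁₁ : ℝ → ℝ is a C² function with ∫_ℝ χ₁₁² dy = 1, satisfying the eigenvalue equation \tilde{L}_{11} χ₁₁ = −λ² χ₁₁ for some λ > 0, and satisfying an exponential decay bound |χ₁₁(y)| + |χ₁₁'(y)| ≤ C e^{−a|y|} for some C, a > 0. For any real constant k₁₂ define χ₁₂(y) = φ(y) [ −(σ/(σ+1)) ∫_{−∞}^{y} φ(s)^{2σ−1} χ₁₁(s) ds + k₁₂ ] and χ₋ = e^{iθ}(χ₁₁ + i χ₁₂). Then the quadratic form of the linearized operator at χ₋ equals Re ∫_ℝ (H_φ χ₋) \bar{χ}_₋ dy = −λ² < 0, because φ (χ₁₂/φ)' + (σ/(σ+1)) φ^{2σ} χ₁₁ ≡ 0. -/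

import Mathlib

open Real MeasureTheory

/-- The solitary wave profile `φ_{ω,c}` for the generalized DNLS equation. -/
noncomputable def solProfile (σ ω c : ℝ) (y : ℝ) : ℝ :=
  ((σ + 1) * (4 * ω - c ^ 2) /
      (2 * Real.sqrt ω *
        (Real.cosh (σ * Real.sqrt (4 * ω - c ^ 2) * y) - c / (2 * Real.sqrt ω)))) ^
    (1 / (2 * σ))

/-- The traveling phase `θ_{ω,c}`. -/
noncomputable def travPhase (σ ω c : ℝ) (y : ℝ) : ℝ :=
  c / 2 * y - (1 / (2 * σ + 2)) * ∫ η in Set.Iio y, solProfile σ ω c η ^ (2 * σ)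

/-- Block operator `L₁₁`. -/
noncomputable def opL11 (σ ω c : ℝ) (u : ℝ → ℝ) (y : ℝ) : ℝ :=
  -deriv (deriv u) y + (ω - c ^ 2 / 4) * u y
    + (c * (2 * σ + 1) / 2) * solProfile σ ω c y ^ (2 * σ) * u y
    - ((4 * σ ^ 2 + 6 * σ + 1) / (4 * (σ + 1) ^ 2)) * solProfile σ ω c y ^ (4 * σ) * u y

/-- Block operator `L₂₁`. -/
noncomputable def opL21 (σ ω c : ℝ) (u : ℝ → ℝ) (y : ℝ) : ℝ :=
  -(σ / (σ + 1)) * solProfile σ ω c y ^ (2 * σ - 1) * deriv (solProfile σ ω c) y * u y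
    + (σ / (σ + 1)) * solProfile σ ω c y ^ (2 * σ) * deriv u y

/-- Block operator `L₁₂`. -/
noncomputable def opL12 (σ ω c : ℝ) (u : ℝ → ℝ) (y : ℝ) : ℝ :=
  -((2 * σ + 1) * σ / (σ + 1)) * solProfile σ ω c y ^ (2 * σ - 1) * deriv (solProfile σ ω c) y * u y
    - (σ / (σ + 1)) * solProfile σ ω c y ^ (2 * σ) * deriv u y

/-- Block operator `L₂₂`. -/
noncomputable def opL22 (σ ω c : ℝ) (u : ℝ → ℝ) (y : ℝ) : ℝ :=
  -deriv (deriv u) y + (ω - c ^ 2 / 4) * u y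
    + (c / 2) * solProfile σ ω c y ^ (2 * σ) * u y
    - ((2 * σ + 1) / (4 * (σ + 1) ^ 2)) * solProfile σ ω c y ^ (4 * σ) * u y

/-- The linearized operator in dephased variables:
`H_φ (e^{iθ}(u₁+iu₂)) = e^{iθ}[(L₁₁u₁ + L₂₁u₂) + i(L₁₂u₁ + L₂₂u₂)]`. -/
noncomputable def opHde (σ ω c : ℝ) (u₁ u₂ : ℝ → ℝ) (y : ℝ) : ℂ :=
  Complex.exp (Complex.I * (travPhase σ ω c y : ℂ)) *
    (((opL11 σ ω c u₁ y + opL21 σ ω c u₂ y : ℝ) : ℂ)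
      + Complex.I * ((opL12 σ ω c u₁ y + opL22 σ ω c u₂ y : ℝ) : ℂ))


/-- The operator `L̃₁₁`. -/
noncomputable def opL11tilde (σ ω c : ℝ) (u : ℝ → ℝ) (y : ℝ) : ℝ :=
  -deriv (deriv u) y + (ω - c ^ 2 / 4) * u y
    + (c * (2 * σ + 1) / 2) * solProfile σ ω c y ^ (2 * σ) * u y
    - ((8 * σ ^ 2 + 6 * σ + 1) / (4 * (σ + 1) ^ 2)) * solProfile σ ω c y ^ (4 * σ) * u y


open Filter Set
noncomputable def auxW (σ ω c y : ℝ) : ℝ :=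
  Real.cosh (σ * Real.sqrt (4 * ω - c ^ 2) * y) - c / (2 * Real.sqrt ω)

noncomputable def auxF (σ ω c y : ℝ) : ℝ :=
  (σ + 1) * (4 * ω - c ^ 2) / (2 * Real.sqrt ω * auxW σ ω c y)

noncomputable def auxPd (σ ω c y : ℝ) : ℝ :=
  -(1 / (2 * σ)) * solProfile σ ω c y *
    (σ * Real.sqrt (4 * ω - c ^ 2) * Real.sinh (σ * Real.sqrt (4 * ω - c ^ 2) * y)) /
    auxW σ ω c y

lemma omega_pos {ω c : ℝ} (h : c ^ 2 < 4 * ω) : 0 < ω := by nlinarith [sq_nonneg c]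

lemma sqrt_omega_pos {ω c : ℝ} (h : c ^ 2 < 4 * ω) : 0 < Real.sqrt ω :=
  Real.sqrt_pos.mpr (omega_pos h)

lemma abs_c_lt {ω c : ℝ} (h : c ^ 2 < 4 * ω) : |c| < 2 * Real.sqrt ω := by
  have h1 : Real.sqrt (c ^ 2) < Real.sqrt (4 * ω) := Real.sqrt_lt_sqrt (sq_nonneg c) h
  rw [Real.sqrt_sq_eq_abs] at h1
  have h4 : Real.sqrt (4 * ω) = 2 * Real.sqrt ω := by
    rw [show (4:ℝ) * ω = 2 ^ 2 * ω by ring, Real.sqrt_mul (by positivity),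
      Real.sqrt_sq (by norm_num)]
  linarith
lemma d_lt_one {ω c : ℝ} (h : c ^ 2 < 4 * ω) : c / (2 * Real.sqrt ω) < 1 := by
  have hs := sqrt_omega_pos h
  rw [div_lt_one (by positivity)]
  have := abs_c_lt h
  have := le_abs_self c
  linarith

lemma auxW_pos {σ ω c : ℝ} (h : c ^ 2 < 4 * ω) (y : ℝ) : 0 < auxW σ ω c y := by
  have h1 := Real.one_le_cosh (σ * Real.sqrt (4 * ω - c ^ 2) * y)
  have h2 := d_lt_one h
  unfold auxW; linarith

lemma auxF_pos {σ ω c : ℝ} (hσ : 0 < σ) (h : c ^ 2 < 4 * ω) (y : ℝ) : 0 < auxF σ ω c y := by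
  have h1 := auxW_pos (σ := σ) h y
  have hs := sqrt_omega_pos h
  unfold auxF
  exact div_pos (mul_pos (by linarith) (by linarith)) (by positivity)

lemma solProfile_eq (σ ω c y : ℝ) : solProfile σ ω c y = auxF σ ω c y ^ (1 / (2 * σ)) := rfl

lemma sol_pos {σ ω c : ℝ} (hσ : 0 < σ) (h : c ^ 2 < 4 * ω) (y : ℝ) : 0 < solProfile σ ω c y := by
  rw [solProfile_eq]; exact Real.rpow_pos_of_pos (auxF_pos hσ h y) _

lemma sol_rpow_2σ {σ ω c : ℝ} (hσ : 0 < σ) (h : c ^ 2 < 4 * ω) (y : ℝ) :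
    solProfile σ ω c y ^ (2 * σ) = auxF σ ω c y := by
  rw [solProfile_eq, ← Real.rpow_mul (auxF_pos hσ h y).le]
  rw [show 1 / (2 * σ) * (2 * σ) = 1 by field_simp, Real.rpow_one]

lemma sol_rpow_4σ {σ ω c : ℝ} (hσ : 0 < σ) (h : c ^ 2 < 4 * ω) (y : ℝ) :
    solProfile σ ω c y ^ (4 * σ) = auxF σ ω c y ^ 2 := by
  rw [solProfile_eq, ← Real.rpow_mul (auxF_pos hσ h y).le]
  rw [show 1 / (2 * σ) * (4 * σ) = ((2:ℕ):ℝ) by push_cast; field_simp; ring, Real.rpow_natCast]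

lemma sol_rpow_2σm1 {σ ω c : ℝ} (hσ : 0 < σ) (h : c ^ 2 < 4 * ω) (y : ℝ) :
    solProfile σ ω c y ^ (2 * σ - 1) * solProfile σ ω c y = auxF σ ω c y := by
  have hp := sol_pos hσ h y
  calc solProfile σ ω c y ^ (2 * σ - 1) * solProfile σ ω c y
      = solProfile σ ω c y ^ (2 * σ - 1) * solProfile σ ω c y ^ (1:ℝ) := by
        rw [Real.rpow_one]
    _ = solProfile σ ω c y ^ (2 * σ - 1 + 1) := (Real.rpow_add hp _ _).symm
    _ = solProfile σ ω c y ^ (2 * σ) := by rw [show 2 * σ - 1 + 1 = 2 * σ by ring]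
    _ = auxF σ ω c y := sol_rpow_2σ hσ h y

lemma hasDerivAt_auxW (σ ω c y : ℝ) :
    HasDerivAt (auxW σ ω c)
      (σ * Real.sqrt (4 * ω - c ^ 2) * Real.sinh (σ * Real.sqrt (4 * ω - c ^ 2) * y)) y := by
  have h1 : HasDerivAt (fun x : ℝ => σ * Real.sqrt (4 * ω - c ^ 2) * x)
      (σ * Real.sqrt (4 * ω - c ^ 2)) y := by
    simpa using (hasDerivAt_id y).const_mul (σ * Real.sqrt (4 * ω - c ^ 2))
  have h2 := ((Real.hasDerivAt_cosh (σ * Real.sqrt (4 * ω - c ^ 2) * y)).comp y h1).sub_const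
    (c / (2 * Real.sqrt ω))
  have he : auxW σ ω c = fun x : ℝ =>
      Real.cosh (σ * Real.sqrt (4 * ω - c ^ 2) * x) - c / (2 * Real.sqrt ω) := rfl
  rw [he, show σ * Real.sqrt (4 * ω - c ^ 2) * Real.sinh (σ * Real.sqrt (4 * ω - c ^ 2) * y)
      = Real.sinh (σ * Real.sqrt (4 * ω - c ^ 2) * y) * (σ * Real.sqrt (4 * ω - c ^ 2))
      from mul_comm _ _]
  exact h2

lemma hasDerivAt_auxF {σ ω c : ℝ} (hσ : 0 < σ) (h : c ^ 2 < 4 * ω) (y : ℝ) :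
    HasDerivAt (auxF σ ω c)
      (-auxF σ ω c y * (σ * Real.sqrt (4 * ω - c ^ 2) *
        Real.sinh (σ * Real.sqrt (4 * ω - c ^ 2) * y)) / auxW σ ω c y) y := by
  have hW := auxW_pos (σ := σ) h y
  have hs := sqrt_omega_pos h
  have hden : HasDerivAt (fun x => 2 * Real.sqrt ω * auxW σ ω c x)
      (2 * Real.sqrt ω * (σ * Real.sqrt (4 * ω - c ^ 2) *
        Real.sinh (σ * Real.sqrt (4 * ω - c ^ 2) * y))) y :=
    (hasDerivAt_auxW σ ω c y).const_mul _
  have hne : 2 * Real.sqrt ω * auxW σ ω c y ≠ 0 := by positivity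
  have hd := (hasDerivAt_const y ((σ + 1) * (4 * ω - c ^ 2))).div hden hne
  have hval : (0 * (2 * Real.sqrt ω * auxW σ ω c y) -
      (σ + 1) * (4 * ω - c ^ 2) * (2 * Real.sqrt ω * (σ * Real.sqrt (4 * ω - c ^ 2) *
        Real.sinh (σ * Real.sqrt (4 * ω - c ^ 2) * y)))) / (2 * Real.sqrt ω * auxW σ ω c y) ^ 2
      = -auxF σ ω c y * (σ * Real.sqrt (4 * ω - c ^ 2) *
        Real.sinh (σ * Real.sqrt (4 * ω - c ^ 2) * y)) / auxW σ ω c y := by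
    unfold auxF
    field_simp
    ring
  exact hval ▸ hd

lemma hasDerivAt_sol {σ ω c : ℝ} (hσ : 0 < σ) (h : c ^ 2 < 4 * ω) (y : ℝ) :
    HasDerivAt (solProfile σ ω c) (auxPd σ ω c y) y := by
  have hF := auxF_pos hσ h y
  have h1 := (hasDerivAt_auxF hσ h y).rpow_const (p := 1 / (2 * σ)) (Or.inl hF.ne')
  have hfun : (fun x => auxF σ ω c x ^ (1 / (2 * σ))) = solProfile σ ω c := by
    funext x; exact (solProfile_eq σ ω c x).symm
  rw [hfun] at h1
  have key : auxF σ ω c y ^ (1 / (2 * σ) - 1) * auxF σ ω c y = solProfile σ ω c y := by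
    calc auxF σ ω c y ^ (1 / (2 * σ) - 1) * auxF σ ω c y
        = auxF σ ω c y ^ (1 / (2 * σ) - 1) * auxF σ ω c y ^ (1:ℝ) := by rw [Real.rpow_one]
      _ = auxF σ ω c y ^ (1 / (2 * σ) - 1 + 1) := (Real.rpow_add hF _ _).symm
      _ = auxF σ ω c y ^ (1 / (2 * σ)) := by rw [show 1 / (2*σ) - 1 + 1 = 1 / (2*σ) by ring]
      _ = solProfile σ ω c y := (solProfile_eq σ ω c y).symm
  convert h1 using 1
  unfold auxPd
  rw [← key]
  ring

lemma deriv_sol {σ ω c : ℝ} (hσ : 0 < σ) (h : c ^ 2 < 4 * ω) :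
    deriv (solProfile σ ω c) = auxPd σ ω c :=
  funext fun y => (hasDerivAt_sol hσ h y).deriv

lemma hasDerivAt_auxPd {σ ω c : ℝ} (hσ : 0 < σ) (h : c ^ 2 < 4 * ω) (y : ℝ) :
    HasDerivAt (auxPd σ ω c)
      ((ω - c ^ 2 / 4) * solProfile σ ω c y + c / 2 * auxF σ ω c y * solProfile σ ω c y
        - (2 * σ + 1) / (4 * (σ + 1) ^ 2) * auxF σ ω c y ^ 2 * solProfile σ ω c y) y := by
  have hW := auxW_pos (σ := σ) h y
  have hφ := sol_pos hσ h y
  have hs := sqrt_omega_pos h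
  have ha : HasDerivAt (fun x => -(1 / (2 * σ)) * solProfile σ ω c x)
      (-(1 / (2 * σ)) * auxPd σ ω c y) y := (hasDerivAt_sol hσ h y).const_mul _
  have hb1 : HasDerivAt (fun x : ℝ => σ * Real.sqrt (4 * ω - c ^ 2) * x)
      (σ * Real.sqrt (4 * ω - c ^ 2)) y := by
    simpa using (hasDerivAt_id y).const_mul (σ * Real.sqrt (4 * ω - c ^ 2))
  have hb : HasDerivAt (fun x => σ * Real.sqrt (4 * ω - c ^ 2) *
      Real.sinh (σ * Real.sqrt (4 * ω - c ^ 2) * x))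
      (σ * Real.sqrt (4 * ω - c ^ 2) * (Real.cosh (σ * Real.sqrt (4 * ω - c ^ 2) * y) *
        (σ * Real.sqrt (4 * ω - c ^ 2)))) y :=
    ((Real.hasDerivAt_sinh (σ * Real.sqrt (4 * ω - c ^ 2) * y)).comp y hb1).const_mul _
  have hnum := ha.mul hb
  have hq := hnum.div (hasDerivAt_auxW σ ω c y) hW.ne'
  have hfun : (fun x => (-(1 / (2 * σ)) * solProfile σ ω c x) *
      (σ * Real.sqrt (4 * ω - c ^ 2) * Real.sinh (σ * Real.sqrt (4 * ω - c ^ 2) * x)) /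
      auxW σ ω c x) = auxPd σ ω c := by
    funext x; unfold auxPd; ring
  rw [show ((fun x => -(1 / (2 * σ)) * solProfile σ ω c x) * fun x =>
      σ * Real.sqrt (4 * ω - c ^ 2) * Real.sinh (σ * Real.sqrt (4 * ω - c ^ 2) * x)) /
      auxW σ ω c = auxPd σ ω c from hfun] at hq
  simp only [Pi.mul_apply] at hq
  have hX : Real.cosh (σ * Real.sqrt (4 * ω - c ^ 2) * y)
      = auxW σ ω c y + c / (2 * Real.sqrt ω) := by unfold auxW; ring
  have hS2' : Real.sinh (σ * Real.sqrt (4 * ω - c ^ 2) * y) ^ 2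
      = (auxW σ ω c y + c / (2 * Real.sqrt ω)) ^ 2 - 1 := by
    rw [Real.sinh_sq, hX]
  have hr2' : Real.sqrt (4 * ω - c ^ 2) ^ 2 = 4 * Real.sqrt ω ^ 2 - c ^ 2 := by
    rw [Real.sq_sqrt (by linarith : (0:ℝ) ≤ 4 * ω - c ^ 2), Real.sq_sqrt (omega_pos h).le]
  have hFd' : auxF σ ω c y
      = (σ + 1) * Real.sqrt (4 * ω - c ^ 2) ^ 2 / (2 * Real.sqrt ω * auxW σ ω c y) := by
    unfold auxF
    rw [Real.sq_sqrt (by linarith : (0:ℝ) ≤ 4 * ω - c ^ 2)]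
  have hν : ω - c ^ 2 / 4 = Real.sqrt ω ^ 2 - c ^ 2 / 4 := by
    rw [Real.sq_sqrt (omega_pos h).le]
  have stepA : ((-(1 / (2 * σ)) * auxPd σ ω c y *
        (σ * Real.sqrt (4 * ω - c ^ 2) * Real.sinh (σ * Real.sqrt (4 * ω - c ^ 2) * y)) +
        -(1 / (2 * σ)) * solProfile σ ω c y *
        (σ * Real.sqrt (4 * ω - c ^ 2) * (Real.cosh (σ * Real.sqrt (4 * ω - c ^ 2) * y) *
          (σ * Real.sqrt (4 * ω - c ^ 2))))) * auxW σ ω c y -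
        -(1 / (2 * σ)) * solProfile σ ω c y *
        (σ * Real.sqrt (4 * ω - c ^ 2) * Real.sinh (σ * Real.sqrt (4 * ω - c ^ 2) * y)) *
        (σ * Real.sqrt (4 * ω - c ^ 2) * Real.sinh (σ * Real.sqrt (4 * ω - c ^ 2) * y))) /
        auxW σ ω c y ^ 2
      = solProfile σ ω c y * (σ * Real.sqrt (4 * ω - c ^ 2)) ^ 2 *
        ((1 / (2 * σ) ^ 2 + 1 / (2 * σ)) *
          Real.sinh (σ * Real.sqrt (4 * ω - c ^ 2) * y) ^ 2 / auxW σ ω c y ^ 2 -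
          1 / (2 * σ) * Real.cosh (σ * Real.sqrt (4 * ω - c ^ 2) * y) / auxW σ ω c y) := by
    unfold auxPd
    field_simp
    ring
  have stepB : solProfile σ ω c y * (σ * Real.sqrt (4 * ω - c ^ 2)) ^ 2 *
        ((1 / (2 * σ) ^ 2 + 1 / (2 * σ)) *
          Real.sinh (σ * Real.sqrt (4 * ω - c ^ 2) * y) ^ 2 / auxW σ ω c y ^ 2 -
          1 / (2 * σ) * Real.cosh (σ * Real.sqrt (4 * ω - c ^ 2) * y) / auxW σ ω c y)
      = (ω - c ^ 2 / 4) * solProfile σ ω c y + c / 2 * auxF σ ω c y * solProfile σ ω c y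
        - (2 * σ + 1) / (4 * (σ + 1) ^ 2) * auxF σ ω c y ^ 2 * solProfile σ ω c y := by
    rw [hS2', hX, hFd', hν, mul_pow, hr2']
    have hWne := hW.ne'
    have hsne := hs.ne'
    have hσne := hσ.ne'
    have hσ1ne : σ + 1 ≠ 0 := by positivity
    field_simp
    ring
  exact hq.congr_deriv (by rw [← stepB, ← stepA])

lemma deriv_deriv_sol {σ ω c : ℝ} (hσ : 0 < σ) (h : c ^ 2 < 4 * ω) (y : ℝ) :
    deriv (deriv (solProfile σ ω c)) y
      = (ω - c ^ 2 / 4) * solProfile σ ω c y + c / 2 * auxF σ ω c y * solProfile σ ω c y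
        - (2 * σ + 1) / (4 * (σ + 1) ^ 2) * auxF σ ω c y ^ 2 * solProfile σ ω c y := by
  rw [deriv_sol hσ h]
  exact (hasDerivAt_auxPd hσ h y).deriv

lemma cosh_le_exp_abs (x : ℝ) : Real.cosh x ≤ Real.exp |x| := by
  have h1 : Real.exp x ≤ Real.exp |x| := Real.exp_le_exp.mpr (le_abs_self x)
  have h2 : Real.exp (-x) ≤ Real.exp |x| := Real.exp_le_exp.mpr (neg_le_abs x)
  rw [Real.cosh_eq]; linarith

lemma exp_abs_le_two_mul_cosh (x : ℝ) : Real.exp |x| ≤ 2 * Real.cosh x := by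
  rw [Real.cosh_eq]
  rcases abs_cases x with ⟨h1, _⟩ | ⟨h1, _⟩ <;> rw [h1] <;>
    [linarith [Real.exp_pos (-x)]; linarith [Real.exp_pos x]]

lemma abs_arg_eq {σ ω c : ℝ} (hσ : 0 < σ) (h : c ^ 2 < 4 * ω) (y : ℝ) :
    |σ * Real.sqrt (4 * ω - c ^ 2) * y| = σ * Real.sqrt (4 * ω - c ^ 2) * |y| := by
  have hk : 0 < σ * Real.sqrt (4 * ω - c ^ 2) :=
    mul_pos hσ (Real.sqrt_pos.mpr (by linarith))
  rw [abs_mul, abs_of_pos hk]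

lemma auxF_upper {σ ω c : ℝ} (hσ : 0 < σ) (h : c ^ 2 < 4 * ω) :
    ∃ CF > 0, ∀ y : ℝ,
      auxF σ ω c y ≤ CF * Real.exp (-(σ * Real.sqrt (4 * ω - c ^ 2)) * |y|) := by
  have hs := sqrt_omega_pos h
  have h4 : (0:ℝ) < 4 * ω - c ^ 2 := by linarith
  have hm : 0 < 1 - max (c / (2 * Real.sqrt ω)) 0 := by
    have := d_lt_one h
    rcases max_cases (c / (2 * Real.sqrt ω)) 0 with ⟨he, _⟩ | ⟨he, _⟩ <;> rw [he] <;> linarith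
  set m := 1 - max (c / (2 * Real.sqrt ω)) 0 with hmdef
  have hA : (0:ℝ) < (σ + 1) * (4 * ω - c ^ 2) := mul_pos (by linarith) h4
  refine ⟨2 * ((σ + 1) * (4 * ω - c ^ 2)) / (2 * Real.sqrt ω * m),
    by positivity, fun y => ?_⟩
  have hWm : m * Real.cosh (σ * Real.sqrt (4 * ω - c ^ 2) * y) ≤ auxW σ ω c y := by
    have hcosh := Real.one_le_cosh (σ * Real.sqrt (4 * ω - c ^ 2) * y)
    unfold auxW
    rcases max_cases (c / (2 * Real.sqrt ω)) 0 with ⟨he, hd0⟩ | ⟨he, hd0⟩ <;>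
      simp only [hmdef, he] <;> nlinarith
  have hWe : m * (Real.exp (σ * Real.sqrt (4 * ω - c ^ 2) * |y|) / 2) ≤ auxW σ ω c y := by
    have h1 := exp_abs_le_two_mul_cosh (σ * Real.sqrt (4 * ω - c ^ 2) * y)
    rw [abs_arg_eq hσ h y] at h1
    have h2 : m * (Real.exp (σ * Real.sqrt (4 * ω - c ^ 2) * |y|) / 2)
        ≤ m * Real.cosh (σ * Real.sqrt (4 * ω - c ^ 2) * y) := by
      apply mul_le_mul_of_nonneg_left _ hm.le
      linarith
    exact h2.trans hWm
  have hden : 0 < 2 * Real.sqrt ω * (m * (Real.exp (σ * Real.sqrt (4 * ω - c ^ 2) * |y|) / 2)) := by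
    positivity
  have key : auxF σ ω c y ≤ (σ + 1) * (4 * ω - c ^ 2) /
      (2 * Real.sqrt ω * (m * (Real.exp (σ * Real.sqrt (4 * ω - c ^ 2) * |y|) / 2))) := by
    unfold auxF
    apply div_le_div_of_nonneg_left hA.le hden
    have : (0:ℝ) < 2 * Real.sqrt ω := by positivity
    nlinarith [hWe]
  refine key.trans (le_of_eq ?_)
  rw [show -(σ * Real.sqrt (4 * ω - c ^ 2)) * |y| = -(σ * Real.sqrt (4 * ω - c ^ 2) * |y|) by
    ring, Real.exp_neg]
  have hexp := Real.exp_pos (σ * Real.sqrt (4 * ω - c ^ 2) * |y|)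
  field_simp

lemma auxF_lower {σ ω c : ℝ} (hσ : 0 < σ) (h : c ^ 2 < 4 * ω) :
    ∃ cF > 0, ∀ y : ℝ,
      cF * Real.exp (-(σ * Real.sqrt (4 * ω - c ^ 2)) * |y|) ≤ auxF σ ω c y := by
  have hs := sqrt_omega_pos h
  have h4 : (0:ℝ) < 4 * ω - c ^ 2 := by linarith
  have hA : (0:ℝ) < (σ + 1) * (4 * ω - c ^ 2) := mul_pos (by linarith) h4
  have h1d : (0:ℝ) < 1 + |c / (2 * Real.sqrt ω)| := by positivity
  refine ⟨(σ + 1) * (4 * ω - c ^ 2) / (2 * Real.sqrt ω * (1 + |c / (2 * Real.sqrt ω)|)),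
    by positivity, fun y => ?_⟩
  have hWle : auxW σ ω c y ≤ (1 + |c / (2 * Real.sqrt ω)|) *
      Real.exp (σ * Real.sqrt (4 * ω - c ^ 2) * |y|) := by
    have h1 := cosh_le_exp_abs (σ * Real.sqrt (4 * ω - c ^ 2) * y)
    rw [abs_arg_eq hσ h y] at h1
    have h2 : -(c / (2 * Real.sqrt ω)) ≤ |c / (2 * Real.sqrt ω)| := neg_le_abs _
    have h3 := Real.exp_pos (σ * Real.sqrt (4 * ω - c ^ 2) * |y|)
    have h4' : (1:ℝ) ≤ Real.exp (σ * Real.sqrt (4 * ω - c ^ 2) * |y|) :=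
      Real.one_le_exp (by positivity)
    unfold auxW
    nlinarith [abs_nonneg (c / (2 * Real.sqrt ω))]
  have hW := auxW_pos (σ := σ) h y
  have key : (σ + 1) * (4 * ω - c ^ 2) / (2 * Real.sqrt ω * ((1 + |c / (2 * Real.sqrt ω)|) *
      Real.exp (σ * Real.sqrt (4 * ω - c ^ 2) * |y|))) ≤ auxF σ ω c y := by
    unfold auxF
    apply div_le_div_of_nonneg_left hA.le (by positivity)
    have : (0:ℝ) < 2 * Real.sqrt ω := by positivity
    nlinarith [hWle]
  refine le_trans (le_of_eq ?_) key
  rw [show -(σ * Real.sqrt (4 * ω - c ^ 2)) * |y| = -(σ * Real.sqrt (4 * ω - c ^ 2) * |y|) by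
    ring, Real.exp_neg]
  have hexp := Real.exp_pos (σ * Real.sqrt (4 * ω - c ^ 2) * |y|)
  field_simp

lemma sol_lower {σ ω c : ℝ} (hσ : 0 < σ) (h : c ^ 2 < 4 * ω) :
    ∃ cp > 0, ∀ y : ℝ,
      cp * Real.exp (-(Real.sqrt (4 * ω - c ^ 2) / 2) * |y|) ≤ solProfile σ ω c y := by
  obtain ⟨cF, hcF, hlow⟩ := auxF_lower hσ h
  refine ⟨cF ^ (1 / (2 * σ)), Real.rpow_pos_of_pos hcF _, fun y => ?_⟩
  have h1 : (cF * Real.exp (-(σ * Real.sqrt (4 * ω - c ^ 2)) * |y|)) ^ (1 / (2 * σ))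
      ≤ auxF σ ω c y ^ (1 / (2 * σ)) :=
    Real.rpow_le_rpow (by positivity) (hlow y) (by positivity)
  rw [Real.mul_rpow hcF.le (Real.exp_pos _).le, ← Real.exp_mul] at h1
  rw [show -(σ * Real.sqrt (4 * ω - c ^ 2)) * |y| * (1 / (2 * σ))
      = -(Real.sqrt (4 * ω - c ^ 2) / 2) * |y| by field_simp] at h1
  rw [solProfile_eq]
  exact h1

lemma auxW_continuous (σ ω c : ℝ) : Continuous (auxW σ ω c) := by
  unfold auxW
  exact (Real.continuous_cosh.comp (continuous_const.mul continuous_id)).sub continuous_const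

lemma auxF_continuous {σ ω c : ℝ} (hσ : 0 < σ) (h : c ^ 2 < 4 * ω) :
    Continuous (auxF σ ω c) := by
  unfold auxF
  apply Continuous.div continuous_const (continuous_const.mul (auxW_continuous σ ω c))
  intro x
  have h1 := auxW_pos (σ := σ) h x
  have hs := sqrt_omega_pos h
  exact (mul_pos (by positivity : (0:ℝ) < 2 * Real.sqrt ω) h1).ne'

lemma sol_continuous {σ ω c : ℝ} (hσ : 0 < σ) (h : c ^ 2 < 4 * ω) :
    Continuous (solProfile σ ω c) := by
  have : solProfile σ ω c = fun y => auxF σ ω c y ^ (1 / (2 * σ)) := rfl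
  rw [this]
  exact (auxF_continuous hσ h).rpow_const (fun x => Or.inl (auxF_pos hσ h x).ne')

lemma maxPrin (u : ℝ → ℝ) (hu : ContDiff ℝ 2 u) (μ R M : ℝ) (hμ : 0 < μ) (hM : 0 < M)
    (hMR : u R ≤ M)
    (hq : ∀ y, R ≤ y → 0 ≤ u y → μ ^ 2 * u y ≤ deriv (deriv u) y)
    (hlim : Tendsto u atTop (nhds 0)) :
    ∀ y, R ≤ y → u y ≤ M * Real.exp (-μ * (y - R)) := by
  have hu2 : ContDiff ℝ ((1:ℕ) + 1) u := by exact_mod_cast hu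
  obtain ⟨hud, hcd⟩ := contDiff_succ_iff_deriv.mp hu2
  have hud2 : Differentiable ℝ (deriv u) := hcd.2.differentiable (by simp)
  intro y₀ hy₀
  by_contra hcon
  push_neg at hcon
  set v : ℝ → ℝ := fun y => M * Real.exp (-μ * (y - R)) with hv
  have hvpos : ∀ x, 0 < v x := fun x => by simp only [hv]; positivity
  have hcon' : v y₀ < u y₀ := hcon
  set ε := (u y₀ - v y₀) / 2 with hε
  have hεpos : 0 < ε := by simp only [hε]; linarith [hcon']
  set hfun : ℝ → ℝ := fun y => u y - v y - ε with hh
  have hfy₀ : 0 < hfun y₀ := by simp only [hh, hε]; linarith [hcon']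
  obtain ⟨Y₀, hY₀⟩ := Filter.eventually_atTop.mp (hlim.eventually_lt_const hεpos)
  set Y := max Y₀ (y₀ + 1) with hY
  have hYy₀ : y₀ < Y := lt_of_lt_of_le (by linarith) (le_max_right _ _)
  have hRY : R < Y := lt_of_le_of_lt hy₀ hYy₀
  have hfY : hfun Y < 0 := by
    have h1 : u Y < ε := hY₀ Y (le_max_left _ _)
    have h2 := hvpos Y
    simp only [hh]; linarith
  have hfR : hfun R < 0 := by
    have hvR : v R = M := by simp [hv]
    simp only [hh, hvR]; linarith
  have hvd : ∀ x, HasDerivAt v (-μ * v x) x := by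
    intro x
    have h1 : HasDerivAt (fun y : ℝ => -μ * (y - R)) (-μ) x := by
      simpa using ((hasDerivAt_id x).sub_const R).const_mul (-μ)
    have h2 := ((Real.hasDerivAt_exp (-μ * (x - R))).comp x h1).const_mul M
    have h3 : M * (Real.exp (-μ * (x - R)) * -μ) = -μ * v x := by simp only [hv]; ring
    rw [h3] at h2
    exact h2
  have hhd : ∀ x, HasDerivAt hfun (deriv u x + μ * v x) x := by
    intro x
    have h1 := ((hud x).hasDerivAt.sub (hvd x)).sub_const ε
    have h2 : deriv u x - -μ * v x = deriv u x + μ * v x := by ring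
    rw [h2] at h1
    exact h1
  have hvcont : Continuous v := by
    simp only [hv]
    exact continuous_const.mul (Real.continuous_exp.comp
      (continuous_const.mul (continuous_id.sub continuous_const)))
  have hcont : Continuous hfun := by
    simp only [hh]
    exact (hud.continuous.sub hvcont).sub continuous_const
  obtain ⟨z, hzmem, hzmax⟩ := isCompact_Icc.exists_isMaxOn (Set.nonempty_Icc.mpr hRY.le)
    hcont.continuousOn
  have hzy₀ : hfun y₀ ≤ hfun z := hzmax ⟨hy₀, hYy₀.le⟩
  have hzpos : 0 < hfun z := lt_of_lt_of_le hfy₀ hzy₀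
  have hzR : R < z := by
    rcases eq_or_lt_of_le hzmem.1 with h1 | h1
    · exfalso; rw [h1] at hfR; linarith
    · exact h1
  have hzY : z < Y := by
    rcases eq_or_lt_of_le hzmem.2 with h1 | h1
    · exfalso; rw [← h1] at hfY; linarith
    · exact h1
  have hloc : IsLocalMax hfun z := hzmax.isLocalMax (Icc_mem_nhds hzR hzY)
  have hderiv : deriv hfun = fun x => deriv u x + μ * v x := funext fun x => (hhd x).deriv
  have hdz : deriv hfun z = 0 := hloc.deriv_eq_zero
  have huz : 0 ≤ u z := by
    have h2 : u z = hfun z + v z + ε := by simp only [hh]; ring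
    have := hvpos z
    linarith
  have hK : 0 < deriv (deriv u) z - μ ^ 2 * v z := by
    have h1 := hq z hzR.le huz
    have h2 : u z = hfun z + v z + ε := by simp only [hh]; ring
    have h3 : 0 < μ ^ 2 * (hfun z + ε) := mul_pos (pow_pos hμ 2) (by linarith)
    have h4 : μ ^ 2 * u z - μ ^ 2 * v z = μ ^ 2 * (hfun z + ε) := by rw [h2]; ring
    linarith
  have hDd : HasDerivAt (deriv hfun) (deriv (deriv u) z - μ ^ 2 * v z) z := by
    have h1 : HasDerivAt (fun x => deriv u x + μ * v x)
        (deriv (deriv u) z + μ * (-μ * v z)) z :=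
      ((hud2 z).hasDerivAt).add ((hvd z).const_mul μ)
    have h2 : deriv (deriv u) z + μ * (-μ * v z) = deriv (deriv u) z - μ ^ 2 * v z := by ring
    rw [h2] at h1
    rw [hderiv]
    exact h1
  have hslope := hasDerivAt_iff_tendsto_slope.mp hDd
  have hev : ∀ᶠ x in nhdsWithin z (Set.Ioi z), 0 < slope (deriv hfun) z x := by
    have h1 : ∀ᶠ x in nhdsWithin z ({z}ᶜ), 0 < slope (deriv hfun) z x :=
      hslope.eventually_const_lt hK
    exact h1.filter_mono (nhdsWithin_mono z (fun x hx => ne_of_gt hx))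
  obtain ⟨b, hb, hball⟩ := mem_nhdsGT_iff_exists_Ioo_subset.mp hev
  have hbz : z < b := hb
  set y₁ := min ((z + b) / 2) ((z + Y) / 2) with hy₁
  have hzy₁ : z < y₁ := lt_min (by linarith) (by linarith)
  have hy₁b : y₁ < b := lt_of_le_of_lt (min_le_left _ _) (by linarith)
  have hy₁Y : y₁ < Y := lt_of_le_of_lt (min_le_right _ _) (by linarith)
  obtain ⟨ξ, hξ, hξeq⟩ := exists_hasDerivAt_eq_slope hfun (deriv hfun) hzy₁
    hcont.continuousOn (fun x _ => by rw [hderiv]; exact hhd x)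
  have hξpos : 0 < deriv hfun ξ := by
    have hmem : ξ ∈ Set.Ioo z b := ⟨hξ.1, lt_trans hξ.2 hy₁b⟩
    have h1 := hball hmem
    simp only [Set.mem_setOf_eq, slope_def_field, hdz, sub_zero] at h1
    have h2 : 0 < ξ - z := by linarith [hξ.1]
    have h3 := mul_pos h1 h2
    rwa [div_mul_cancel₀ _ (ne_of_gt h2)] at h3
  have hcontra : hfun z < hfun y₁ := by
    rw [hξeq] at hξpos
    have h2 : 0 < y₁ - z := by linarith
    have h3 := mul_pos hξpos h2
    rw [div_mul_cancel₀ _ (ne_of_gt h2)] at h3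
    linarith
  have : hfun y₁ ≤ hfun z := hzmax ⟨by linarith, hy₁Y.le⟩
  linarith

lemma maxPrinAbs (u Q : ℝ → ℝ) (hu : ContDiff ℝ 2 u) (μ R M : ℝ) (hμ : 0 < μ) (hM : 0 < M)
    (hMR : |u R| ≤ M)
    (heq : ∀ y, R ≤ y → deriv (deriv u) y = Q y * u y) (hQ : ∀ y, R ≤ y → μ ^ 2 ≤ Q y)
    (hlim : Tendsto u atTop (nhds 0)) :
    ∀ y, R ≤ y → |u y| ≤ M * Real.exp (-μ * (y - R)) := by
  have h1 := maxPrin u hu μ R M hμ hM ((le_abs_self _).trans hMR)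
    (fun y hy hy0 => by
      rw [heq y hy]
      exact mul_le_mul_of_nonneg_right (hQ y hy) hy0) hlim
  have hneg : ContDiff ℝ 2 (fun x => -u x) := hu.neg
  have hd1 : (deriv fun x => -u x) = fun x => -deriv u x := funext fun x => deriv.neg
  have hd2 : ∀ y, deriv (deriv (fun x => -u x)) y = -deriv (deriv u) y := by
    intro y
    rw [hd1]
    exact deriv.neg
  have h2 := maxPrin (fun x => -u x) hneg μ R M hμ hM
    (by
      have := neg_abs_le (u R)
      linarith [hMR])
    (fun y hy hy0 => by
      rw [hd2 y, heq y hy]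
      nlinarith [hQ y hy])
    (by simpa using hlim.neg)
  intro y hy
  have h2y := h2 y hy
  exact abs_le.mpr ⟨by linarith, h1 y hy⟩

lemma integrable_exp_neg_mul_abs {b : ℝ} (hb : 0 < b) :
    Integrable (fun x : ℝ => Real.exp (-b * |x|)) := by
  have hIoi : IntegrableOn (fun x : ℝ => Real.exp (-b * |x|)) (Set.Ioi 0) :=
    (exp_neg_integrableOn_Ioi 0 hb).congr_fun
      (fun x hx => by rw [abs_of_pos hx]) measurableSet_Ioi
  rw [← integrableOn_univ, ← @Iio_union_Ici _ _ (0 : ℝ), integrableOn_union,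
    integrableOn_Ici_iff_integrableOn_Ioi]
  constructor
  · rw [← (Measure.measurePreserving_neg (volume : Measure ℝ)).integrableOn_comp_preimage
        (Homeomorph.neg ℝ).measurableEmbedding]
    simp only [Function.comp_def, abs_neg, neg_preimage, neg_Iio, neg_zero]
    exact hIoi
  · exact hIoi

lemma integrable_of_exp_bound (f : ℝ → ℝ) (hf : Continuous f) (K b : ℝ) (hb : 0 < b)
    (hbound : ∀ x, |f x| ≤ K * Real.exp (-b * |x|)) : Integrable f := by
  apply ((integrable_exp_neg_mul_abs hb).const_mul K).mono' hf.aestronglyMeasurable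
  exact Filter.Eventually.of_forall (fun x => by
    rw [Real.norm_eq_abs]
    exact hbound x)

lemma hasDerivAt_integral_Iio (f : ℝ → ℝ) (hf : Integrable f) (hc : Continuous f) (y : ℝ) :
    HasDerivAt (fun s => ∫ t in Set.Iio s, f t) (f y) y := by
  have key : (fun s : ℝ => ∫ t in Set.Iio s, f t)
      = fun s => (∫ t in Set.Iic (0:ℝ), f t) + ∫ t in (0:ℝ)..s, f t := by
    funext s
    rw [← MeasureTheory.integral_Iic_eq_integral_Iio,
      ← intervalIntegral.integral_Iic_sub_Iic hf.integrableOn hf.integrableOn]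
    ring
  rw [key]
  exact (intervalIntegral.integral_hasDerivAt_right hf.intervalIntegrable
    hc.stronglyMeasurable.stronglyMeasurableAtFilter hc.continuousAt).const_add _

lemma re_inner (θ P Q A B : ℝ) :
    (Complex.exp (Complex.I * (θ:ℂ)) * (((P:ℝ):ℂ) + Complex.I * ((Q:ℝ):ℂ)) *
      (starRingEnd ℂ) (Complex.exp (Complex.I * (θ:ℂ)) * (((A:ℝ):ℂ) + Complex.I * ((B:ℝ):ℂ)))).re
    = P * A + Q * B := by
  have hconj : (starRingEnd ℂ) (Complex.exp (Complex.I * (θ:ℂ))) =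
      Complex.exp (-(Complex.I * (θ:ℂ))) := by
    rw [← Complex.exp_conj]
    congr 1
    simp [map_mul, Complex.conj_I, Complex.conj_ofReal]
  rw [map_mul, hconj, map_add, map_mul, Complex.conj_I, Complex.conj_ofReal, Complex.conj_ofReal]
  have hsplit : Complex.exp (Complex.I * (θ:ℂ)) * (((P:ℝ):ℂ) + Complex.I * ((Q:ℝ):ℂ)) *
      (Complex.exp (-(Complex.I * (θ:ℂ))) * (((A:ℝ):ℂ) + -Complex.I * ((B:ℝ):ℂ)))
      = (Complex.exp (Complex.I * (θ:ℂ)) * Complex.exp (-(Complex.I * (θ:ℂ)))) *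
        ((((P:ℝ):ℂ) + Complex.I * ((Q:ℝ):ℂ)) * (((A:ℝ):ℂ) + -Complex.I * ((B:ℝ):ℂ))) := by
    ring
  rw [hsplit, ← Complex.exp_add]
  rw [show Complex.I * (θ:ℂ) + -(Complex.I * (θ:ℂ)) = 0 by ring, Complex.exp_zero, one_mul]
  simp [Complex.add_re, Complex.mul_re, Complex.add_im, Complex.mul_im]


set_option maxHeartbeats 1000000 in
theorem negative_direction (σ ω c : ℝ) (hσ : 0 < σ) (h : c ^ 2 < 4 * ω)
    (χ₁₁ : ℝ → ℝ) (hχ : ContDiff ℝ 2 χ₁₁)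
    (hnorm : (∫ y : ℝ, χ₁₁ y ^ 2) = 1)
    (lam : ℝ) (hlam : 0 < lam)
    (heig : ∀ y : ℝ, opL11tilde σ ω c χ₁₁ y = -lam ^ 2 * χ₁₁ y)
    (C a : ℝ) (hC : 0 < C) (ha : 0 < a)
    (hdecay : ∀ y : ℝ, |χ₁₁ y| + |deriv χ₁₁ y| ≤ C * Real.exp (-a * |y|))
    (k₁₂ : ℝ) :
    (∀ y : ℝ,
        solProfile σ ω c y *
            deriv (fun s =>
              (solProfile σ ω c s *
                (-(σ / (σ + 1)) * (∫ t in Set.Iio s, solProfile σ ω c t ^ (2 * σ - 1) * χ₁₁ t)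
                  + k₁₂)) / solProfile σ ω c s) y
          + (σ / (σ + 1)) * solProfile σ ω c y ^ (2 * σ) * χ₁₁ y = 0) ∧
    (∫ y : ℝ,
        (opHde σ ω c χ₁₁
            (fun s =>
              solProfile σ ω c s *
                (-(σ / (σ + 1)) * (∫ t in Set.Iio s, solProfile σ ω c t ^ (2 * σ - 1) * χ₁₁ t)
                  + k₁₂)) y *
          (starRingEnd ℂ) (Complex.exp (Complex.I * (travPhase σ ω c y : ℂ)) *
            ((χ₁₁ y : ℂ) + Complex.I *
              ((solProfile σ ω c y *
                (-(σ / (σ + 1)) * (∫ t in Set.Iio y, solProfile σ ω c t ^ (2 * σ - 1) * χ₁₁ t)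
                  + k₁₂) : ℝ) : ℂ)))).re)
      = -lam ^ 2 ∧
    -lam ^ 2 < 0 := by
  have h4 : (0:ℝ) < 4 * ω - c ^ 2 := by linarith
  have hrpos : 0 < Real.sqrt (4 * ω - c ^ 2) := Real.sqrt_pos.mpr h4
  have hμpos : 0 < Real.sqrt (4 * ω - c ^ 2) / 2 := by positivity
  have hμ2 : (Real.sqrt (4 * ω - c ^ 2) / 2) ^ 2 = ω - c ^ 2 / 4 := by
    rw [div_pow, Real.sq_sqrt h4.le]; ring
  have hk : 0 < σ * Real.sqrt (4 * ω - c ^ 2) := mul_pos hσ hrpos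
  have hχ2 : ContDiff ℝ ((1:ℕ) + 1) χ₁₁ := by exact_mod_cast hχ
  obtain ⟨hχd, hχcd⟩ := contDiff_succ_iff_deriv.mp hχ2
  have hχd2 : Differentiable ℝ (deriv χ₁₁) := hχcd.2.differentiable (by simp)
  -- eigenvalue equation in explicit second-derivative form
  have heig' : ∀ y : ℝ, deriv (deriv χ₁₁) y =
      ((ω - c ^ 2 / 4) + lam ^ 2 + (c * (2 * σ + 1) / 2) * auxF σ ω c y
        - ((8 * σ ^ 2 + 6 * σ + 1) / (4 * (σ + 1) ^ 2)) * auxF σ ω c y ^ 2) * χ₁₁ y := by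
    intro y
    have h1 := heig y
    simp only [opL11tilde] at h1
    rw [sol_rpow_2σ hσ h y, sol_rpow_4σ hσ h y] at h1
    linear_combination -h1
  -- decay of χ₁₁ to zero at ±∞
  have habs : ∀ y : ℝ, ‖χ₁₁ y‖ ≤ C * Real.exp (-a * |y|) := fun y => by
    rw [Real.norm_eq_abs]; linarith [hdecay y, abs_nonneg (deriv χ₁₁ y)]
  have hgtop : Filter.Tendsto (fun y : ℝ => C * Real.exp (-a * |y|)) Filter.atTop (nhds 0) := by
    have h1 : Filter.Tendsto (fun y : ℝ => a * |y|) Filter.atTop Filter.atTop :=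
      tendsto_abs_atTop_atTop.const_mul_atTop ha
    have h3 := (Real.tendsto_exp_neg_atTop_nhds_zero.comp h1).const_mul C
    simp only [Function.comp_def, mul_zero] at h3
    have he : (fun y : ℝ => C * Real.exp (-a * |y|)) = fun y => C * Real.exp (-(a * |y|)) := by
      funext y; rw [neg_mul]
    rw [he]; exact h3
  have hgbot : Filter.Tendsto (fun y : ℝ => C * Real.exp (-a * |y|)) Filter.atBot (nhds 0) := by
    have h1 : Filter.Tendsto (fun y : ℝ => a * |y|) Filter.atBot Filter.atTop :=
      tendsto_abs_atBot_atTop.const_mul_atTop ha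
    have h3 := (Real.tendsto_exp_neg_atTop_nhds_zero.comp h1).const_mul C
    simp only [Function.comp_def, mul_zero] at h3
    have he : (fun y : ℝ => C * Real.exp (-a * |y|)) = fun y => C * Real.exp (-(a * |y|)) := by
      funext y; rw [neg_mul]
    rw [he]; exact h3
  have htop : Filter.Tendsto χ₁₁ Filter.atTop (nhds 0) := squeeze_zero_norm habs hgtop
  have hbot : Filter.Tendsto χ₁₁ Filter.atBot (nhds 0) := squeeze_zero_norm habs hgbot
  obtain ⟨CF, hCFpos, hCF⟩ := auxF_upper hσ h
  obtain ⟨cp, hcppos, hcp⟩ := sol_lower hσ h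
  have e9 : (0:ℝ) < 4 * (σ + 1) ^ 2 := by nlinarith
  have e8 : (0:ℝ) < 8 * σ ^ 2 + 6 * σ + 1 := by nlinarith
  have h8 := div_pos e8 e9
  have hc0 : 0 ≤ |c| * (2 * σ + 1) / 2 :=
    div_nonneg (mul_nonneg (abs_nonneg c) (by linarith)) (by norm_num)
  have hSb : (0:ℝ) < |c| * (2 * σ + 1) / 2 + (8 * σ ^ 2 + 6 * σ + 1) / (4 * (σ + 1) ^ 2) := by
    linarith
  obtain ⟨δ, hδpos, hδ1, hδSb⟩ : ∃ δ : ℝ, 0 < δ ∧ δ ≤ 1 ∧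
      (|c| * (2 * σ + 1) / 2 + (8 * σ ^ 2 + 6 * σ + 1) / (4 * (σ + 1) ^ 2)) * δ ≤ lam ^ 2 := by
    refine ⟨min 1 (lam ^ 2 / (1 + (|c| * (2 * σ + 1) / 2 +
        (8 * σ ^ 2 + 6 * σ + 1) / (4 * (σ + 1) ^ 2)))),
      lt_min one_pos (div_pos (pow_pos hlam 2) (by linarith)), min_le_left _ _, ?_⟩
    have h5 := min_le_right (1:ℝ) (lam ^ 2 / (1 + (|c| * (2 * σ + 1) / 2 +
        (8 * σ ^ 2 + 6 * σ + 1) / (4 * (σ + 1) ^ 2))))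
    set S := |c| * (2 * σ + 1) / 2 + (8 * σ ^ 2 + 6 * σ + 1) / (4 * (σ + 1) ^ 2)
    calc S * min 1 (lam ^ 2 / (1 + S)) ≤ S * (lam ^ 2 / (1 + S)) :=
          mul_le_mul_of_nonneg_left h5 hSb.le
      _ ≤ lam ^ 2 := by
          have hu : lam ^ 2 / (1 + S) * (1 + S) = lam ^ 2 := div_mul_cancel₀ _ (by linarith)
          nlinarith [hu, div_nonneg (pow_pos hlam 2).le (show (0:ℝ) ≤ 1 + S by linarith)]
  obtain ⟨R, hR0, hFsmall⟩ : ∃ R : ℝ, 0 ≤ R ∧ ∀ y : ℝ, R ≤ |y| → auxF σ ω c y ≤ δ := by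
    refine ⟨max 0 (Real.log (CF / δ) / (σ * Real.sqrt (4 * ω - c ^ 2))), le_max_left _ _,
      fun y hy => ?_⟩
    have h2 : Real.log (CF / δ) / (σ * Real.sqrt (4 * ω - c ^ 2)) ≤ |y| :=
      le_trans (le_max_right _ _) hy
    rw [div_le_iff₀ hk] at h2
    have h5 : CF / δ ≤ Real.exp (σ * Real.sqrt (4 * ω - c ^ 2) * |y|) := by
      rw [← Real.exp_log (div_pos hCFpos hδpos)]
      exact Real.exp_le_exp.mpr (by nlinarith [h2])
    have h6 : Real.exp (-(σ * Real.sqrt (4 * ω - c ^ 2)) * |y|) ≤ δ / CF := by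
      rw [show -(σ * Real.sqrt (4 * ω - c ^ 2)) * |y|
          = -(σ * Real.sqrt (4 * ω - c ^ 2) * |y|) by ring, Real.exp_neg,
        show δ / CF = (CF / δ)⁻¹ by rw [inv_div]]
      exact inv_anti₀ (div_pos hCFpos hδpos) h5
    calc auxF σ ω c y ≤ CF * Real.exp (-(σ * Real.sqrt (4 * ω - c ^ 2)) * |y|) := hCF y
      _ ≤ CF * (δ / CF) := mul_le_mul_of_nonneg_left h6 hCFpos.le
      _ = δ := by field_simp
  have hQge : ∀ y : ℝ, R ≤ |y| → (Real.sqrt (4 * ω - c ^ 2) / 2) ^ 2 ≤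
      (ω - c ^ 2 / 4) + lam ^ 2 + (c * (2 * σ + 1) / 2) * auxF σ ω c y
        - ((8 * σ ^ 2 + 6 * σ + 1) / (4 * (σ + 1) ^ 2)) * auxF σ ω c y ^ 2 := by
    intro y hy
    have hF0 := (auxF_pos hσ h y).le
    have hFδ := hFsmall y hy
    rw [hμ2]
    have t1 : 0 ≤ (c + |c|) * ((2 * σ + 1) / 2 * auxF σ ω c y) :=
      mul_nonneg (by linarith [neg_abs_le c]) (mul_nonneg (by linarith) hF0)
    have t2 : 0 ≤ (|c| * (2 * σ + 1) / 2) * (δ - auxF σ ω c y) :=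
      mul_nonneg hc0 (by linarith)
    have t3 : auxF σ ω c y ^ 2 ≤ δ := by nlinarith
    have e2 : (8 * σ ^ 2 + 6 * σ + 1) / (4 * (σ + 1) ^ 2) * auxF σ ω c y ^ 2
        ≤ (8 * σ ^ 2 + 6 * σ + 1) / (4 * (σ + 1) ^ 2) * δ := mul_le_mul_of_nonneg_left t3 h8.le
    nlinarith [t1, t2, e2, hδSb]
  -- bound at R
  have hMR : |χ₁₁ R| ≤ C := by
    have h1 := hdecay R
    have h3 : Real.exp (-a * |R|) ≤ 1 := Real.exp_le_one_iff.mpr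
      (by nlinarith [abs_nonneg R])
    nlinarith [abs_nonneg (deriv χ₁₁ R), abs_nonneg (χ₁₁ R)]
  have hRight := maxPrinAbs χ₁₁
    (fun y => (ω - c ^ 2 / 4) + lam ^ 2 + (c * (2 * σ + 1) / 2) * auxF σ ω c y
      - ((8 * σ ^ 2 + 6 * σ + 1) / (4 * (σ + 1) ^ 2)) * auxF σ ω c y ^ 2)
    hχ (Real.sqrt (4 * ω - c ^ 2) / 2) R C hμpos hC hMR
    (fun y _ => by exact heig' y)
    (fun y hy => by
      exact hQge y (by rw [abs_of_nonneg (hR0.trans hy)]; exact hy))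
    htop
  -- mirrored bound
  have hd1m : ∀ x : ℝ, HasDerivAt (fun x => χ₁₁ (-x)) (-deriv χ₁₁ (-x)) x := by
    intro x
    have h1 := (hχd (-x)).hasDerivAt.comp x (hasDerivAt_neg x)
    rw [show deriv χ₁₁ (-x) * (-1) = -deriv χ₁₁ (-x) by ring] at h1
    exact h1
  have hd1m' : deriv (fun x => χ₁₁ (-x)) = fun x => -deriv χ₁₁ (-x) :=
    funext fun x => (hd1m x).deriv
  have hd2m : ∀ x : ℝ, deriv (deriv (fun x => χ₁₁ (-x))) x = deriv (deriv χ₁₁) (-x) := by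
    intro x
    rw [hd1m']
    have h1 := ((hχd2 (-x)).hasDerivAt.comp x (hasDerivAt_neg x)).neg
    rw [show -(deriv (deriv χ₁₁) (-x) * (-1)) = deriv (deriv χ₁₁) (-x) by ring] at h1
    exact h1.deriv
  have hχmcd : ContDiff ℝ 2 (fun x => χ₁₁ (-x)) := hχ.comp (contDiff_id.neg)
  have hMRm : |χ₁₁ (-R)| ≤ C := by
    have h1 := hdecay (-R)
    rw [abs_neg] at h1
    have h3 : Real.exp (-a * |R|) ≤ 1 := Real.exp_le_one_iff.mpr
      (by nlinarith [abs_nonneg R])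
    nlinarith [abs_nonneg (deriv χ₁₁ (-R)), abs_nonneg (χ₁₁ (-R))]
  have hLeft := maxPrinAbs (fun x => χ₁₁ (-x))
    (fun x => (ω - c ^ 2 / 4) + lam ^ 2 + (c * (2 * σ + 1) / 2) * auxF σ ω c (-x)
      - ((8 * σ ^ 2 + 6 * σ + 1) / (4 * (σ + 1) ^ 2)) * auxF σ ω c (-x) ^ 2)
    hχmcd (Real.sqrt (4 * ω - c ^ 2) / 2) R C hμpos hC (by exact hMRm)
    (fun y _ => by rw [hd2m y]; exact heig' (-y))
    (fun y hy => by
      exact hQge (-y) (by rw [abs_neg, abs_of_nonneg (hR0.trans hy)]; exact hy))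
    (hbot.comp tendsto_neg_atTop_atBot)
  -- global decay bound for χ₁₁
  have hMxe : ∀ t : ℝ, C * Real.exp (-(Real.sqrt (4 * ω - c ^ 2) / 2) * (t - R))
      = C * Real.exp (Real.sqrt (4 * ω - c ^ 2) / 2 * R)
        * Real.exp (-(Real.sqrt (4 * ω - c ^ 2) / 2) * t) := by
    intro t
    rw [mul_assoc, ← Real.exp_add]
    congr 1
    ring
  have hχb : ∀ y : ℝ, |χ₁₁ y| ≤ C * Real.exp (Real.sqrt (4 * ω - c ^ 2) / 2 * R)
      * Real.exp (-(Real.sqrt (4 * ω - c ^ 2) / 2) * |y|) := by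
    intro y
    rcases le_total R y with hy | hy
    · have h0 : 0 ≤ y := hR0.trans hy
      have h1 := hRight y hy
      rw [hMxe y] at h1
      rwa [abs_of_nonneg h0]
    · rcases le_total y (-R) with hy2 | hy2
      · have h1 := hLeft (-y) (by linarith)
        simp only [neg_neg] at h1
        rw [hMxe (-y)] at h1
        rwa [abs_of_nonpos (by linarith : y ≤ 0)]
      · have hyabs : |y| ≤ R := abs_le.mpr ⟨hy2, hy⟩
        have h2 : |χ₁₁ y| ≤ C := by
          have h1 := hdecay y
          have h3 : Real.exp (-a * |y|) ≤ 1 := Real.exp_le_one_iff.mpr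
            (by nlinarith [abs_nonneg y])
          nlinarith [abs_nonneg (deriv χ₁₁ y), abs_nonneg (χ₁₁ y)]
        have h3 : C ≤ C * Real.exp (Real.sqrt (4 * ω - c ^ 2) / 2 * R)
            * Real.exp (-(Real.sqrt (4 * ω - c ^ 2) / 2) * |y|) := by
          rw [mul_assoc, ← Real.exp_add]
          have h5 : (0:ℝ) ≤ Real.sqrt (4 * ω - c ^ 2) / 2 * R
              + -(Real.sqrt (4 * ω - c ^ 2) / 2) * |y| := by nlinarith [hμpos, abs_nonneg y]
          nlinarith [Real.one_le_exp h5]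
        linarith
  -- the integrand of the antiderivative and its integrability
  have hppos : ∀ t : ℝ, 0 < solProfile σ ω c t ^ (2 * σ - 1) :=
    fun t => Real.rpow_pos_of_pos (sol_pos hσ h t) _
  have hfcont : Continuous (fun t => solProfile σ ω c t ^ (2 * σ - 1) * χ₁₁ t) :=
    ((sol_continuous hσ h).rpow_const (fun x => Or.inl (sol_pos hσ h x).ne')).mul hχd.continuous
  have hfb : ∀ t : ℝ, |solProfile σ ω c t ^ (2 * σ - 1) * χ₁₁ t|
      ≤ (CF * (C * Real.exp (Real.sqrt (4 * ω - c ^ 2) / 2 * R)) / cp)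
        * Real.exp (-(σ * Real.sqrt (4 * ω - c ^ 2)) * |t|) := by
    intro t
    have hpeq : solProfile σ ω c t ^ (2 * σ - 1) = auxF σ ω c t / solProfile σ ω c t := by
      rw [eq_div_iff (sol_pos hσ h t).ne']
      exact sol_rpow_2σm1 hσ h t
    have hdiv : auxF σ ω c t / solProfile σ ω c t
        ≤ (CF * Real.exp (-(σ * Real.sqrt (4 * ω - c ^ 2)) * |t|))
          / (cp * Real.exp (-(Real.sqrt (4 * ω - c ^ 2) / 2) * |t|)) :=
      div_le_div₀ (mul_nonneg hCFpos.le (Real.exp_pos _).le) (hCF t)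
        (mul_pos hcppos (Real.exp_pos _)) (hcp t)
    calc |solProfile σ ω c t ^ (2 * σ - 1) * χ₁₁ t|
        = auxF σ ω c t / solProfile σ ω c t * |χ₁₁ t| := by
          rw [abs_mul, abs_of_pos (hppos t), hpeq]
      _ ≤ (CF * Real.exp (-(σ * Real.sqrt (4 * ω - c ^ 2)) * |t|))
            / (cp * Real.exp (-(Real.sqrt (4 * ω - c ^ 2) / 2) * |t|))
          * (C * Real.exp (Real.sqrt (4 * ω - c ^ 2) / 2 * R)
            * Real.exp (-(Real.sqrt (4 * ω - c ^ 2) / 2) * |t|)) := by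
          apply mul_le_mul hdiv (hχb t) (abs_nonneg _)
          exact div_nonneg (mul_nonneg hCFpos.le (Real.exp_pos _).le)
            (mul_nonneg hcppos.le (Real.exp_pos _).le)
      _ = (CF * (C * Real.exp (Real.sqrt (4 * ω - c ^ 2) / 2 * R)) / cp)
            * Real.exp (-(σ * Real.sqrt (4 * ω - c ^ 2)) * |t|) := by
          field_simp
  have hfint : Integrable (fun t => solProfile σ ω c t ^ (2 * σ - 1) * χ₁₁ t) :=
    integrable_of_exp_bound _ hfcont _ _ hk hfb
  have hI : ∀ x : ℝ, HasDerivAt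
      (fun s => ∫ t in Set.Iio s, solProfile σ ω c t ^ (2 * σ - 1) * χ₁₁ t)
      (solProfile σ ω c x ^ (2 * σ - 1) * χ₁₁ x) x :=
    fun x => hasDerivAt_integral_Iio _ hfint hfcont x
  have hGd : ∀ x : ℝ, HasDerivAt
      (fun s => -(σ / (σ + 1)) * (∫ t in Set.Iio s, solProfile σ ω c t ^ (2 * σ - 1) * χ₁₁ t)
        + k₁₂)
      (-(σ / (σ + 1)) * (solProfile σ ω c x ^ (2 * σ - 1) * χ₁₁ x)) x :=
    fun x => ((hI x).const_mul _).add_const _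
  -- derivatives of u₂
  have hu2d : ∀ x : ℝ, HasDerivAt
      (fun s => solProfile σ ω c s *
        (-(σ / (σ + 1)) * (∫ t in Set.Iio s, solProfile σ ω c t ^ (2 * σ - 1) * χ₁₁ t) + k₁₂))
      (auxPd σ ω c x *
        (-(σ / (σ + 1)) * (∫ t in Set.Iio x, solProfile σ ω c t ^ (2 * σ - 1) * χ₁₁ t) + k₁₂)
        - σ / (σ + 1) * (auxF σ ω c x * χ₁₁ x)) x := by
    intro x
    have h1 := (hasDerivAt_sol hσ h x).mul (hGd x)
    refine h1.congr_deriv ?_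
    rw [← sol_rpow_2σm1 hσ h x]
    ring
  have hu2d' : deriv (fun s => solProfile σ ω c s *
      (-(σ / (σ + 1)) * (∫ t in Set.Iio s, solProfile σ ω c t ^ (2 * σ - 1) * χ₁₁ t) + k₁₂))
      = fun x => auxPd σ ω c x *
        (-(σ / (σ + 1)) * (∫ t in Set.Iio x, solProfile σ ω c t ^ (2 * σ - 1) * χ₁₁ t) + k₁₂)
        - σ / (σ + 1) * (auxF σ ω c x * χ₁₁ x) :=
    funext fun x => (hu2d x).deriv
  have hu2dd : ∀ x : ℝ, deriv (deriv (fun s => solProfile σ ω c s *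
      (-(σ / (σ + 1)) * (∫ t in Set.Iio s, solProfile σ ω c t ^ (2 * σ - 1) * χ₁₁ t) + k₁₂))) x
      = ((ω - c ^ 2 / 4) * solProfile σ ω c x + c / 2 * auxF σ ω c x * solProfile σ ω c x
          - (2 * σ + 1) / (4 * (σ + 1) ^ 2) * auxF σ ω c x ^ 2 * solProfile σ ω c x) *
        (-(σ / (σ + 1)) * (∫ t in Set.Iio x, solProfile σ ω c t ^ (2 * σ - 1) * χ₁₁ t) + k₁₂)
        + auxPd σ ω c x * (-(σ / (σ + 1)) * (solProfile σ ω c x ^ (2 * σ - 1) * χ₁₁ x))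
        - σ / (σ + 1) * ((-auxF σ ω c x * (σ * Real.sqrt (4 * ω - c ^ 2) *
            Real.sinh (σ * Real.sqrt (4 * ω - c ^ 2) * x)) / auxW σ ω c x) * χ₁₁ x
          + auxF σ ω c x * deriv χ₁₁ x) := by
    intro x
    rw [hu2d']
    have h1 := (((hasDerivAt_auxPd hσ h x).mul (hGd x)).sub
      (((hasDerivAt_auxF hσ h x).mul (hχd x).hasDerivAt).const_mul (σ / (σ + 1))))
    have h2 := h1.deriv
    exact h2
  have hFd2 : ∀ x : ℝ, -auxF σ ω c x * (σ * Real.sqrt (4 * ω - c ^ 2) *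
      Real.sinh (σ * Real.sqrt (4 * ω - c ^ 2) * x)) / auxW σ ω c x
      = 2 * σ * (solProfile σ ω c x ^ (2 * σ - 1) * auxPd σ ω c x) := by
    intro x
    rw [← sol_rpow_2σm1 hσ h x]
    unfold auxPd
    have hW := (auxW_pos (σ := σ) h x).ne'
    field_simp
  refine ⟨?_, ?_, by nlinarith [pow_pos hlam 2]⟩
  · -- first conjunct
    intro y
    have hfeq : (fun s =>
        (solProfile σ ω c s *
          (-(σ / (σ + 1)) * (∫ t in Set.Iio s, solProfile σ ω c t ^ (2 * σ - 1) * χ₁₁ t)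
            + k₁₂)) / solProfile σ ω c s)
        = fun s => -(σ / (σ + 1)) * (∫ t in Set.Iio s, solProfile σ ω c t ^ (2 * σ - 1) * χ₁₁ t)
            + k₁₂ := by
      funext s
      exact mul_div_cancel_left₀ _ (sol_pos hσ h s).ne'
    rw [hfeq, (hGd y).deriv, sol_rpow_2σ hσ h y]
    linear_combination (-(σ / (σ + 1)) * χ₁₁ y) * sol_rpow_2σm1 hσ h y
  · -- second conjunct
    have key : ∀ y : ℝ,
        (opHde σ ω c χ₁₁
            (fun s =>
              solProfile σ ω c s *
                (-(σ / (σ + 1)) * (∫ t in Set.Iio s, solProfile σ ω c t ^ (2 * σ - 1) * χ₁₁ t)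
                  + k₁₂)) y *
          (starRingEnd ℂ) (Complex.exp (Complex.I * (travPhase σ ω c y : ℂ)) *
            ((χ₁₁ y : ℂ) + Complex.I *
              ((solProfile σ ω c y *
                (-(σ / (σ + 1)) * (∫ t in Set.Iio y, solProfile σ ω c t ^ (2 * σ - 1) * χ₁₁ t)
                  + k₁₂) : ℝ) : ℂ)))).re = -lam ^ 2 * χ₁₁ y ^ 2 := by
      intro y
      simp only [opHde]
      rw [re_inner]
      simp only [opL11, opL21, opL12, opL22]
      rw [hu2dd y, hu2d', deriv_sol hσ h]
      simp only []
      rw [sol_rpow_2σ hσ h y, sol_rpow_4σ hσ h y, hFd2 y]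
      have heig2 := heig' y
      have hinv : ((4:ℝ) + σ * 8 + σ ^ 2 * 4)⁻¹ * 4 = ((1:ℝ) + σ)⁻¹ ^ 2 := by
        have h1 : ((1:ℝ) + σ) ≠ 0 := by linarith
        have h2 : ((4:ℝ) + σ * 8 + σ ^ 2 * 4) ≠ 0 := by nlinarith
        field_simp
        ring
      linear_combination (-(χ₁₁ y)) * heig2 +
        (-(σ / (σ + 1)) * auxPd σ ω c y *
          (-(σ / (σ + 1)) * (∫ t in Set.Iio y, solProfile σ ω c t ^ (2 * σ - 1) * χ₁₁ t) + k₁₂)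
          * χ₁₁ y) * sol_rpow_2σm1 hσ h y +
        (χ₁₁ y ^ 2 * σ ^ 2 * auxF σ ω c y ^ 2) * hinv
    simp only [key]
    rw [MeasureTheory.integral_const_mul, hnorm, mul_one]
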